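/- Global Markov property from pairwise Markov property for positive distributions: if a strictly positive joint distribution P over random variables indexed by the vertices of a finite undirected graph G satisfies the pairwise Markov property (X_a ⊥ X_b | X_{V∖{a,b}} whenever {a,b} is not an edge of G), then P satisfies the global Markov property: whenever a set S of vertices separates vertices a and b in G (every path from a to b intersects S), X_a ⊥ X_b | X_S. -/
import Mathlib


open Finset

/-- The marginal of the joint pmf `p` over the coordinates in `A`, evaluated at the
assignment `x` (i.e. the probability that the coordinates in `A` agree with `x`). -/
def margin {V α : Type*} [Fintype V] [DecidableEq V] [Fintype α] [DecidableEq α]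
    (p : (V → α) → ℝ) (A : Finset V) (x : V → α) : ℝ :=
  ∑ y ∈ Finset.univ.filter (fun y : V → α => ∀ v ∈ A, y v = x v), p y

/-- `X_a` and `X_b` are conditionally independent given the coordinates in `S`, for the joint
pmf `p`: the usual product factorization of marginals. -/
def CondIndepCoord {V α : Type*} [Fintype V] [DecidableEq V] [Fintype α] [DecidableEq α]
    (p : (V → α) → ℝ) (a b : V) (S : Finset V) : Prop :=
  ∀ x : V → α,
    margin p (insert a (insert b S)) x * margin p S x =
      margin p (insert a S) x * margin p (insert b S) x

section Aux

variable {V α : Type*} [Fintype V] [DecidableEq V] [Fintype α] [DecidableEq α]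

lemma margin_congr (p : (V → α) → ℝ) (A : Finset V) {x y : V → α}
    (h : ∀ v ∈ A, x v = y v) : margin p A x = margin p A y := by
  unfold margin
  refine Finset.sum_congr ?_ fun _ _ => rfl
  ext z
  simp only [mem_filter, mem_univ, true_and]
  exact ⟨fun hz v hv => (hz v hv).trans (h v hv), fun hz v hv => (hz v hv).trans (h v hv).symm⟩

lemma margin_pos (p : (V → α) → ℝ) (hpos : ∀ x, 0 < p x) (A : Finset V) (x : V → α) :
    0 < margin p A x :=
  Finset.sum_pos (fun y _ => hpos y) ⟨x, by simp⟩

lemma margin_update (p : (V → α) → ℝ) (A : Finset V) {c : V} (hc : c ∉ A) (x : V → α) (t : α) :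
    margin p A (Function.update x c t) = margin p A x :=
  margin_congr p A fun v hv => Function.update_of_ne (ne_of_mem_of_not_mem hv hc) t x

lemma margin_sum (p : (V → α) → ℝ) {A : Finset V} {c : V} (hc : c ∉ A) (x : V → α) :
    ∑ t : α, margin p (insert c A) (Function.update x c t) = margin p A x := by
  unfold margin
  rw [← Finset.sum_fiberwise (Finset.univ.filter fun y : V → α => ∀ v ∈ A, y v = x v)
    (fun y => y c) p]
  refine Finset.sum_congr rfl fun t _ => Finset.sum_congr ?_ fun _ _ => rfl
  ext y
  simp only [mem_filter, mem_univ, true_and, Finset.forall_mem_insert,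
    Function.update_self]
  constructor
  · rintro ⟨h1, h2⟩
    exact ⟨fun v hv => (h2 v hv).trans (Function.update_of_ne (ne_of_mem_of_not_mem hv hc) t x), h1⟩
  · rintro ⟨h1, h2⟩
    exact ⟨h2, fun v hv => (h1 v hv).trans (Function.update_of_ne (ne_of_mem_of_not_mem hv hc) t x).symm⟩

lemma condIndepCoord_symm {p : (V → α) → ℝ} {a b : V} {S : Finset V}
    (h : CondIndepCoord p a b S) : CondIndepCoord p b a S := by
  intro x
  have hx := h x
  rw [Finset.insert_comm] at hx
  rw [hx, mul_comm]

lemma intersection_step (p : (V → α) → ℝ) (hpos : ∀ x, 0 < p x)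
    {a b c : V} {S : Finset V} (hc : c ∉ S) (hca : c ≠ a) (hcb : c ≠ b)
    (h1 : CondIndepCoord p a b (insert c S))
    (h2 : CondIndepCoord p a c (insert b S)) :
    CondIndepCoord p a b S := by
  have hcbS : c ∉ insert b S := by simp [hcb, hc]
  have hcaS : c ∉ insert a S := by simp [hca, hc]
  have hcabS : c ∉ insert a (insert b S) := by simp [hca, hcb, hc]
  have star : ∀ x : V → α,
      margin p (insert c (insert a S)) x * margin p (insert b S) x =
      margin p (insert a (insert b S)) x * margin p (insert c S) x := by
    intro x
    have e1 := h1 x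
    have e2 := h2 x
    rw [show insert c (insert b S) = insert b (insert c S) from Finset.insert_comm _ _ _] at e2
    rw [show insert c (insert a S) = insert a (insert c S) from Finset.insert_comm _ _ _]
    have hb0 : margin p (insert b (insert c S)) x ≠ 0 :=
      ne_of_gt (margin_pos p hpos _ x)
    apply mul_right_cancel₀ hb0
    linear_combination margin p (insert c S) x * e2 - margin p (insert b S) x * e1
  intro x
  have key : ∀ t : α,
      margin p (insert c (insert a S)) (Function.update x c t) * margin p (insert b S) x =
      margin p (insert a (insert b S)) x * margin p (insert c S) (Function.update x c t) := by
    intro t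
    have hs := star (Function.update x c t)
    rwa [margin_update p _ hcbS x t, margin_update p _ hcabS x t] at hs
  have hsum := Finset.sum_congr rfl fun t (_ : t ∈ (Finset.univ : Finset α)) => key t
  rw [← Finset.sum_mul, margin_sum p hcaS x, ← Finset.mul_sum, margin_sum p hc x] at hsum
  exact hsum.symm

end Aux

/-- Pairwise Markov implies global Markov for strictly positive distributions: if a strictly
positive joint pmf `p` over the vertices of a finite undirected graph `G` satisfies the
pairwise Markov property (non-adjacent vertices are conditionally independent given all the
remaining variables), then whenever `S` separates `a` from `b` in `G` (every walk from `a`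
to `b` meets `S`), `X_a` and `X_b` are conditionally independent given `X_S`. -/
theorem stmt11 {V α : Type*} [Fintype V] [DecidableEq V] [Fintype α] [DecidableEq α]
    (G : SimpleGraph V) (p : (V → α) → ℝ)
    (hpos : ∀ x, 0 < p x) (hsum : ∑ x : V → α, p x = 1)
    (hpairwise : ∀ a b : V, a ≠ b → ¬ G.Adj a b →
      CondIndepCoord p a b (Finset.univ \ {a, b}))
    (a b : V) (hab : a ≠ b) (S : Finset V) (haS : a ∉ S) (hbS : b ∉ S)
    (hsepar : ∀ w : G.Walk a b, ∃ v ∈ w.support, v ∈ S) :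
    CondIndepCoord p a b S := by
  suffices h : ∀ n (a b : V), a ≠ b → ∀ S : Finset V, a ∉ S → b ∉ S →
      (Finset.univ \ insert a (insert b S)).card = n →
      (∀ w : G.Walk a b, ∃ v ∈ w.support, v ∈ S) → CondIndepCoord p a b S from
    h _ a b hab S haS hbS rfl hsepar
  intro n
  induction n using Nat.strong_induction_on with
  | _ n ih =>
  intro a b hab S haS hbS hcard hsep
  rcases Nat.eq_zero_or_pos n with h0 | hn0
  · -- base case: S = univ \ {a, b}
    subst h0
    have hempty : Finset.univ \ insert a (insert b S) = ∅ := Finset.card_eq_zero.mp hcard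
    have huniv : insert a (insert b S) = Finset.univ :=
      Finset.univ_subset_iff.mp (Finset.sdiff_eq_empty_iff_subset.mp hempty)
    have hS : S = Finset.univ \ {a, b} := by
      ext v
      simp only [mem_sdiff, mem_univ, true_and, mem_insert, mem_singleton]
      constructor
      · intro hv
        push_neg
        exact ⟨fun h => haS (h ▸ hv), fun h => hbS (h ▸ hv)⟩
      · intro hv
        push_neg at hv
        have : v ∈ insert a (insert b S) := huniv ▸ mem_univ v
        simp only [mem_insert] at this
        tauto
    have hnadj : ¬ G.Adj a b := by
      intro hadj
      obtain ⟨v, hv1, hv2⟩ := hsep (SimpleGraph.Walk.cons hadj SimpleGraph.Walk.nil)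
      simp only [SimpleGraph.Walk.support_cons, SimpleGraph.Walk.support_nil,
        List.mem_cons, List.mem_singleton, List.not_mem_nil, or_false] at hv1
      rcases hv1 with rfl | rfl
      · exact haS hv2
      · exact hbS hv2
    rw [hS]
    exact hpairwise a b hab hnadj
  · -- inductive step
    have hne : (Finset.univ \ insert a (insert b S)).Nonempty :=
      Finset.card_pos.mp (hcard ▸ hn0)
    obtain ⟨c, hcmem⟩ := hne
    simp only [mem_sdiff, mem_univ, true_and, mem_insert, not_or] at hcmem
    obtain ⟨hca, hcb, hcS⟩ := hcmem
    have hsetcard : ∀ (T : Finset V), T = insert c (insert a (insert b S)) →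
        (Finset.univ \ T).card = n - 1 := by
      intro T hT
      subst hT
      rw [Finset.sdiff_insert, Finset.card_erase_of_mem, hcard]
      simp only [mem_sdiff, mem_univ, true_and, mem_insert, not_or]
      exact ⟨hca, hcb, hcS⟩
    -- CI(a, b | insert c S)
    have h1 : CondIndepCoord p a b (insert c S) := by
      refine ih (n - 1) (by omega) a b hab (insert c S) ?_ ?_ ?_ ?_
      · simp only [mem_insert, not_or]; exact ⟨fun h => hca h.symm, haS⟩
      · simp only [mem_insert, not_or]; exact ⟨fun h => hcb h.symm, hbS⟩
      · refine hsetcard _ ?_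
        ext v; simp only [Finset.mem_insert]; tauto
      · intro w
        obtain ⟨v, hv1, hv2⟩ := hsep w
        exact ⟨v, hv1, mem_insert_of_mem hv2⟩
    by_cases hacsep : ∀ w : G.Walk a c, ∃ v ∈ w.support, v ∈ insert b S
    · have h2 : CondIndepCoord p a c (insert b S) := by
        refine ih (n - 1) (by omega) a c (fun h => hca h.symm) (insert b S) ?_ ?_ ?_ hacsep
        · simp only [mem_insert, not_or]; exact ⟨hab, haS⟩
        · simp only [mem_insert, not_or]; exact ⟨hcb, hcS⟩
        · refine hsetcard _ ?_
          ext v; simp only [Finset.mem_insert]; tauto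
      exact intersection_step p hpos hcS hca hcb h1 h2
    · push_neg at hacsep
      obtain ⟨w1, hw1⟩ := hacsep
      have hbcsep : ∀ w : G.Walk b c, ∃ v ∈ w.support, v ∈ insert a S := by
        intro w
        by_contra hno
        push_neg at hno
        obtain ⟨v, hv1, hv2⟩ := hsep (w1.append w.reverse)
        rw [SimpleGraph.Walk.mem_support_append_iff] at hv1
        rcases hv1 with h | h
        · exact hw1 v h (mem_insert_of_mem hv2)
        · rw [SimpleGraph.Walk.support_reverse, List.mem_reverse] at h
          exact hno v h (mem_insert_of_mem hv2)
      have h2 : CondIndepCoord p b c (insert a S) := by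
        refine ih (n - 1) (by omega) b c (fun h => hcb h.symm) (insert a S) ?_ ?_ ?_ hbcsep
        · simp only [mem_insert, not_or]; exact ⟨fun h => hab h.symm, hbS⟩
        · simp only [mem_insert, not_or]; exact ⟨hca, hcS⟩
        · refine hsetcard _ ?_
          ext v; simp only [Finset.mem_insert]; tauto
      exact condIndepCoord_symm (intersection_step p hpos hcS hcb hca (condIndepCoord_symm h1) h2)
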